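/- arXiv:1401.6033 — 3 statements merged into one kernel-verified Lean document; each statement's English description precedes it below -/
import Mathlib

section
/- Let a, M be positive integers, let I_g, I_h ⊂ ℤ be finite integer intervals of lengths L_g and L_h with I_g ∩ I_h ≠ ∅, and let g, h ∈ ℓ²(ℤ) with supp(g) ⊆ I_g, supp(h) ⊆ I_h. Let L be a positive integer with L > L_g + L_h, a | L and M | L, and let g_fin, h_fin ∈ ℂ^L be the periodizations of g and h. Then for every m = 0,…,a−1 and every n ∈ ℤ with I_h ∩ (I_g + nM) ≠ ∅, one has ⟨h_fin, (e^{2πim·/a}) · T_{nM} g_fin⟩_{ℂ^L} = ⟨h, M_{m/a} T_{nM} g⟩_{ℓ²(ℤ)}, where the translation on ℂ^L is circular (modulo L). -/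
/-- Periodization of a (finitely supported) sequence `g : ℤ → ℂ` onto `ℂ^L`,
identified with functions on `ZMod L`: `g_fin[l] = ∑_{k ∈ ℤ} g[l - kL]`. -/
noncomputable def periodize (L : ℕ) [NeZero L] (g : ℤ → ℂ) : ZMod L → ℂ :=
  fun l => ∑' k : ℤ, g ((l.val : ℤ) - k * (L : ℤ))

lemma intCast_val_eq (L : ℕ) [NeZero L] (x : ZMod L) : ((x.val : ℤ) : ZMod L) = x := by
  push_cast; simp [ZMod.natCast_val, ZMod.cast_id]

lemma dvd_of_castEq (L : ℕ) [NeZero L] (x : ZMod L) (j : ℤ) (h : (j : ZMod L) = x) :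
    (L : ℤ) ∣ ((x.val : ℤ) - j) := by
  have h2 : (j : ZMod L) = ((x.val : ℤ) : ZMod L) := by rw [intCast_val_eq]; exact h
  exact ((ZMod.intCast_eq_intCast_iff _ _ _).mp h2).dvd

lemma periodize_eq_sum (L : ℕ) [NeZero L] (g : ℤ → ℂ) (s : Finset ℤ)
    (hg : ∀ l : ℤ, g l ≠ 0 → l ∈ s) (x : ZMod L) :
    periodize L g x = ∑ j ∈ (s.filter (fun j : ℤ => ((j : ZMod L) = x))), g j := by
  classical
  have hL0 : (L : ℤ) ≠ 0 := by exact_mod_cast (NeZero.ne L)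
  rw [periodize]
  rw [tsum_eq_sum (s := (s.filter (fun j : ℤ => ((j : ZMod L) = x))).image
      (fun j => ((x.val : ℤ) - j) / L)) ?hvanish]
  case hvanish =>
    intro k hk
    by_contra hne
    have hjs : ((x.val : ℤ) - k * L) ∈ s := hg _ hne
    have hx : (((x.val : ℤ) - k * (L:ℤ) : ℤ) : ZMod L) = x := by
      push_cast
      simp [intCast_val_eq]
    refine hk (Finset.mem_image.mpr ⟨_, Finset.mem_filter.mpr ⟨hjs, hx⟩, ?_⟩)
    have h1 : (x.val : ℤ) - ((x.val : ℤ) - k * L) = k * L := by ring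
    rw [h1, Int.mul_ediv_cancel _ hL0]
  rw [Finset.sum_image ?inj]
  case inj =>
    intro j1 h1 j2 h2 heq
    obtain ⟨c1, hc1⟩ := dvd_of_castEq L x j1 (Finset.mem_filter.mp h1).2
    obtain ⟨c2, hc2⟩ := dvd_of_castEq L x j2 (Finset.mem_filter.mp h2).2
    beta_reduce at heq
    rw [hc1, hc2, Int.mul_ediv_cancel_left _ hL0, Int.mul_ediv_cancel_left _ hL0] at heq
    subst heq
    omega
  refine Finset.sum_congr rfl (fun j hj => ?_)
  obtain ⟨c, hc⟩ := dvd_of_castEq L x j (Finset.mem_filter.mp hj).2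
  congr 1
  rw [hc, Int.mul_ediv_cancel_left _ hL0]
  linarith [hc]

lemma exp_congr (a m : ℕ) (ha : 0 < a) (j k : ℤ) (hd : (a:ℤ) ∣ (j - k)) :
    Complex.exp (2 * Real.pi * Complex.I * (m:ℂ) * (j:ℂ) / (a:ℂ)) =
    Complex.exp (2 * Real.pi * Complex.I * (m:ℂ) * (k:ℂ) / (a:ℂ)) := by
  obtain ⟨c, hc⟩ := hd
  have ha0 : (a:ℂ) ≠ 0 := by exact_mod_cast ha.ne'
  have hj : (j:ℂ) = (k:ℂ) + (a:ℂ) * (c:ℂ) := by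
    have h2 : j = k + (a : ℤ) * c := by omega
    rw [h2]
    push_cast
    ring
  rw [hj]
  have hsplit : 2 * Real.pi * Complex.I * (m:ℂ) * ((k:ℂ) + (a:ℂ)*(c:ℂ)) / (a:ℂ)
      = 2 * Real.pi * Complex.I * (m:ℂ) * (k:ℂ) / (a:ℂ)
        + ((m * c : ℤ):ℂ) * (2 * Real.pi * Complex.I) := by
    push_cast
    field_simp
  rw [hsplit, Complex.exp_add, Complex.exp_int_mul_two_pi_mul_I, mul_one]

/-- for `g`, `h` supported in finite integer intervals `I_g`, `I_h` of
lengths `Lg`, `Lh` with nonempty intersection, `L > Lg + Lh` divisible by `a` and `M`,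
for every `m = 0,…,a-1` and every `n ∈ ℤ` with `I_h ∩ (I_g + nM) ≠ ∅`, the finite
inner product `⟨h_fin, e^{2πim·/a}·T_{nM} g_fin⟩_{ℂ^L}` (circular translation) equals
the `ℓ²(ℤ)` inner product `⟨h, M_{m/a} T_{nM} g⟩`. -/
theorem periodized_wexler_raz_inner_eq
    (a M L : ℕ) (ha : 0 < a) (hM : 0 < M) [NeZero L]
    (haL : a ∣ L) (hML : M ∣ L)
    (ag bg ah bh : ℤ) (Lg Lh : ℕ)
    (hLg : (Finset.Icc ag bg).card = Lg) (hLh : (Finset.Icc ah bh).card = Lh)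
    (hinter : ((Finset.Icc ag bg) ∩ (Finset.Icc ah bh)).Nonempty)
    (hL : Lg + Lh < L)
    (g h : ℤ → ℂ)
    (hgsupp : ∀ l : ℤ, g l ≠ 0 → l ∈ Finset.Icc ag bg)
    (hhsupp : ∀ l : ℤ, h l ≠ 0 → l ∈ Finset.Icc ah bh)
    (m : ℕ) (hm : m < a) (n : ℤ)
    (hn : ((Finset.Icc ah bh) ∩
      (Finset.Icc ag bg).image (fun i => i + n * (M : ℤ))).Nonempty) :
    ∑ l : ZMod L, periodize L h l *
        star (Complex.exp (2 * Real.pi * Complex.I * (m : ℂ) * (l.val : ℂ) / (a : ℂ)) *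
          periodize L g (l - ((n * (M : ℤ) : ℤ) : ZMod L))) =
      ∑' l : ℤ, h l * star (g (l - n * (M : ℤ)) *
        Complex.exp (2 * Real.pi * Complex.I * (m : ℂ) * (l : ℂ) / (a : ℂ))) := by
  classical
  have hL0 : (L : ℤ) ≠ 0 := by exact_mod_cast (NeZero.ne L)
  set t : ℤ := n * (M : ℤ) with ht
  obtain ⟨c0, hc0⟩ := hn
  rw [Finset.mem_inter] at hc0
  obtain ⟨i0, hi0, hi0e⟩ := Finset.mem_image.mp hc0.2
  obtain ⟨p, hp⟩ := hinter
  rw [Finset.mem_inter, Finset.mem_Icc, Finset.mem_Icc] at hp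
  have hLgZ : (Lg : ℤ) = bg - ag + 1 := by
    rw [← hLg, Int.card_Icc]; omega
  have hLhZ : (Lh : ℤ) = bh - ah + 1 := by
    rw [← hLh, Int.card_Icc]; omega
  have key : ∀ j ∈ Finset.Icc ah bh, ∀ j' ∈ Finset.Icc ag bg,
      (L : ℤ) ∣ (j - t - j') → j' = j - t := by
    intro j hj j' hj' hd
    rw [Finset.mem_Icc] at hj hj'
    have hc01 := Finset.mem_Icc.mp hc0.1
    have hi0' := Finset.mem_Icc.mp hi0
    have habs : |j - t - j'| < (L : ℤ) := by
      rw [abs_lt]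
      constructor <;> omega
    have := Int.eq_zero_of_abs_lt_dvd hd habs
    omega
  have hperh := periodize_eq_sum L h _ hhsupp
  have hperg := periodize_eq_sum L g _ hgsupp
  have main : ∀ x : ZMod L,
      periodize L h x *
        star (Complex.exp (2 * Real.pi * Complex.I * (m : ℂ) * (x.val : ℂ) / (a : ℂ)) *
          periodize L g (x - ((t : ℤ) : ZMod L))) =
      ∑ j ∈ (Finset.Icc ah bh).filter (fun j : ℤ => ((j : ZMod L) = x)),
        h j * star (g (j - t) *
          Complex.exp (2 * Real.pi * Complex.I * (m : ℂ) * (j : ℂ) / (a : ℂ))) := by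
    intro x
    rw [hperh x, Finset.sum_mul]
    refine Finset.sum_congr rfl (fun j hj => ?_)
    obtain ⟨hjmem, hjx⟩ := Finset.mem_filter.mp hj
    by_cases hjz : h j = 0
    · simp [hjz]
    · have hdvd1 : (L : ℤ) ∣ ((x.val : ℤ) - j) := dvd_of_castEq L x j hjx
      have hdvd2 : (a : ℤ) ∣ ((x.val : ℤ) - j) :=
        dvd_trans (by exact_mod_cast haL) hdvd1
      have hexp := exp_congr a m ha (x.val : ℤ) j hdvd2
      push_cast at hexp
      have hjtx : ((j - t : ℤ) : ZMod L) = x - ((t : ℤ) : ZMod L) := by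
        push_cast
        rw [hjx]
      have hgval : periodize L g (x - ((t : ℤ) : ZMod L)) = g (j - t) := by
        rw [hperg]
        apply Finset.sum_eq_single (j - t)
        · intro b hb hbne
          by_contra hbz
          obtain ⟨hbmem, hbx⟩ := Finset.mem_filter.mp hb
          have d1 := dvd_of_castEq L (x - ((t : ℤ) : ZMod L)) b hbx
          have d2 := dvd_of_castEq L (x - ((t : ℤ) : ZMod L)) (j - t) hjtx
          have hdd : (L : ℤ) ∣ (j - t - b) := by
            have h3 := dvd_sub d1 d2
            have h4 : (((x - ((t : ℤ) : ZMod L)).val : ℤ) - b) -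
                (((x - ((t : ℤ) : ZMod L)).val : ℤ) - (j - t)) = j - t - b := by ring
            rwa [h4] at h3
          exact hbne (key j hjmem b hbmem hdd)
        · intro hnot
          by_contra hgz
          exact hnot (Finset.mem_filter.mpr ⟨hgsupp _ hgz, hjtx⟩)
      rw [hgval, hexp, star_mul', star_mul']
      ring
  calc
    ∑ l : ZMod L, periodize L h l *
        star (Complex.exp (2 * Real.pi * Complex.I * (m : ℂ) * (l.val : ℂ) / (a : ℂ)) *
          periodize L g (l - ((t : ℤ) : ZMod L)))
      = ∑ x : ZMod L, ∑ j ∈ (Finset.Icc ah bh).filter (fun j : ℤ => ((j : ZMod L) = x)),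
          h j * star (g (j - t) *
            Complex.exp (2 * Real.pi * Complex.I * (m : ℂ) * (j : ℂ) / (a : ℂ))) :=
        Finset.sum_congr rfl (fun x _ => main x)
    _ = ∑ j ∈ Finset.Icc ah bh,
          h j * star (g (j - t) *
            Complex.exp (2 * Real.pi * Complex.I * (m : ℂ) * (j : ℂ) / (a : ℂ))) :=
        Finset.sum_fiberwise _ _ _
    _ = ∑' l : ℤ, h l * star (g (l - t) *
          Complex.exp (2 * Real.pi * Complex.I * (m : ℂ) * (l : ℂ) / (a : ℂ))) := by
        refine (tsum_eq_sum ?_).symm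
        intro l hl
        have : h l = 0 := by
          by_contra hz
          exact hl (hhsupp l hz)
        simp [this]
end

section
/- Let a, M be positive integers, let I_g, I_h ⊂ ℤ be finite integer intervals of lengths L_g and L_h with I_g ∩ I_h ≠ ∅, and let g, h ∈ ℓ²(ℤ) with supp(g) ⊆ I_g, supp(h) ⊆ I_h. Let L be a positive integer with L > L_g + L_h, a | L and M | L, and let g_fin, h_fin ∈ ℂ^L be the periodizations of g and h. Then g and h satisfy the Wexler–Raz equations on ℓ²(ℤ) for parameters a, M if and only if g_fin and h_fin satisfy the Wexler–Raz equations on ℂ^L for parameters a, M. -/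
/-- The Wexler–Raz equations on `ℓ²(ℤ)` for the pair `(g, h)` and parameters `a, M`:
`(M/a)·⟨h, M_{m/a} T_{nM} g⟩ = δ[n]δ[m]` for all `m = 0,…,a-1` and `n ∈ ℤ`. -/
noncomputable def WexlerRazZ (a M : ℕ) (g h : ℤ → ℂ) : Prop :=
  ∀ m : ℕ, m < a → ∀ n : ℤ,
    (M : ℂ) / (a : ℂ) *
      ∑' l : ℤ, h l * star (g (l - n * (M : ℤ)) *
        Complex.exp (2 * Real.pi * Complex.I * (m : ℂ) * (l : ℂ) / (a : ℂ))) =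
      if n = 0 ∧ m = 0 then 1 else 0

/-- The Wexler–Raz equations on `ℂ^L` for the pair `(g, h)` and parameters `a, M`
(with `a ∣ L`, `M ∣ L`), using circular translation:
`(M/a)·⟨h, e^{2πim·/a}·T_{nM} g⟩_{ℂ^L} = δ[n]δ[m]` for `m = 0,…,a-1`, `n = 0,…,L/M-1`. -/
noncomputable def WexlerRazFin (L a M : ℕ) [NeZero L] (g h : ZMod L → ℂ) : Prop :=
  ∀ m : ℕ, m < a → ∀ n : ℕ, n < L / M →
    (M : ℂ) / (a : ℂ) *
      ∑ l : ZMod L, h l *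
        star (Complex.exp (2 * Real.pi * Complex.I * (m : ℂ) * (l.val : ℂ) / (a : ℂ)) *
          g (l - ((n * M : ℕ) : ZMod L))) =
      if n = 0 ∧ m = 0 then 1 else 0

private lemma zmod_cast_val (L : ℕ) [NeZero L] (x : ZMod L) :
    (((x.val : ℤ)) : ZMod L) = x := by
  push_cast
  simp [ZMod.natCast_val, ZMod.cast_id]

private lemma zmod_val_dvd (L : ℕ) [NeZero L] (t : ℤ) :
    (L:ℤ) ∣ (t - ((t : ZMod L).val : ℤ)) := by
  rw [← ZMod.intCast_zmod_eq_zero_iff_dvd]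
  push_cast
  simp [ZMod.natCast_val, ZMod.cast_id]

private lemma cast_eq_iff_dvd (L : ℕ) [NeZero L] (s t : ℤ) :
    ((s : ZMod L) = (t : ZMod L)) ↔ (L:ℤ) ∣ s - t := by
  rw [← sub_eq_zero, ← Int.cast_sub, ZMod.intCast_zmod_eq_zero_iff_dvd]

private lemma cast_sub_mul (L : ℕ) [NeZero L] (x : ZMod L) (k : ℤ) :
    (((x.val : ℤ) - k * L : ℤ) : ZMod L) = x := by
  push_cast
  simp [ZMod.natCast_val, ZMod.cast_id, ZMod.natCast_self]

private lemma periodize_cast_eq (L : ℕ) [NeZero L] (g : ℤ → ℂ) (t : ℤ)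
    (h0 : ∀ k : ℤ, k ≠ 0 → g (t - k * L) = 0) :
    periodize L g (t : ZMod L) = g t := by
  obtain ⟨k₀, hk₀⟩ := zmod_val_dvd L t
  unfold periodize
  rw [tsum_eq_single (-k₀) ?_]
  · congr 1
    linear_combination -hk₀
  · intro k hk
    have he : (((t : ZMod L).val : ℤ)) - k * L = t - (k₀ + k) * L := by
      linear_combination -hk₀
    rw [he]
    exact h0 _ (by intro hc; apply hk; omega)

private lemma periodize_eq_zero (L : ℕ) [NeZero L] (g : ℤ → ℂ) (x : ZMod L)
    (h0 : ∀ k : ℤ, g ((x.val : ℤ) - k * L) = 0) : periodize L g x = 0 := by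
  unfold periodize
  rw [show (fun k : ℤ => g ((x.val : ℤ) - k * (L:ℤ))) = fun _ => (0:ℂ) from funext h0]
  exact tsum_zero

private lemma periodize_cast_eq_zero (L : ℕ) [NeZero L] (g : ℤ → ℂ) (t : ℤ)
    (h0 : ∀ k : ℤ, g (t - k * L) = 0) :
    periodize L g (t : ZMod L) = 0 := by
  obtain ⟨k₀, hk₀⟩ := zmod_val_dvd L t
  apply periodize_eq_zero
  intro k
  have he : (((t : ZMod L).val : ℤ)) - k * L = t - (k₀ + k) * L := by
    linear_combination -hk₀
  rw [he]
  exact h0 _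

private lemma phase_eq (a L : ℕ) [NeZero L] (ha : 0 < a) (haL : a ∣ L) (m : ℕ) (t : ℤ) :
    Complex.exp (2 * Real.pi * Complex.I * (m:ℂ) * (((t : ZMod L).val : ℕ) : ℂ) / (a:ℂ)) =
    Complex.exp (2 * Real.pi * Complex.I * (m:ℂ) * (t:ℂ) / (a:ℂ)) := by
  obtain ⟨k, hk⟩ := zmod_val_dvd L t
  obtain ⟨c, hc⟩ := haL
  have ha' : (a:ℂ) ≠ 0 := Nat.cast_ne_zero.mpr ha.ne'
  have h1 : t = ((t : ZMod L).val : ℤ) + (L:ℤ) * k := by linarith [hk]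
  have h2 : (t:ℂ) = (((t : ZMod L).val : ℕ):ℂ) + (a:ℂ) * (c:ℂ) * (k:ℂ) := by
    have hLc : ((L:ℤ):ℂ) = (a:ℂ) * (c:ℂ) := by
      have : (L:ℤ) = (a:ℤ) * (c:ℤ) := by exact_mod_cast hc
      rw [this]; push_cast; ring
    calc (t:ℂ) = ((((t : ZMod L).val : ℤ)):ℂ) + ((L:ℤ):ℂ) * (k:ℂ) := by exact_mod_cast h1
    _ = _ := by rw [hLc]; push_cast; ring
  rw [show 2 * Real.pi * Complex.I * (m:ℂ) * (t:ℂ) / (a:ℂ)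
      = 2 * Real.pi * Complex.I * (m:ℂ) * (((t : ZMod L).val : ℕ) : ℂ) / (a:ℂ)
        + ((m * c * k : ℤ):ℂ) * (2 * Real.pi * Complex.I) from by
    rw [h2]; push_cast; field_simp]
  rw [Complex.exp_add, Complex.exp_int_mul_two_pi_mul_I, mul_one]

/-- for `g`, `h` supported in finite integer intervals of lengths `Lg`, `Lh`
with nonempty intersection, and `L > Lg + Lh` divisible by `a` and `M`, the pair `(g, h)`
satisfies the Wexler–Raz equations on `ℓ²(ℤ)` iff the periodized pair `(g_fin, h_fin)`
satisfies the Wexler–Raz equations on `ℂ^L`. -/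
theorem wexler_raz_iff_periodized
    (a M L : ℕ) (ha : 0 < a) (hM : 0 < M) [NeZero L]
    (haL : a ∣ L) (hML : M ∣ L)
    (ag bg ah bh : ℤ) (Lg Lh : ℕ)
    (hLg : (Finset.Icc ag bg).card = Lg) (hLh : (Finset.Icc ah bh).card = Lh)
    (hinter : ((Finset.Icc ag bg) ∩ (Finset.Icc ah bh)).Nonempty)
    (hL : Lg + Lh < L)
    (g h : ℤ → ℂ)
    (hgsupp : ∀ l : ℤ, g l ≠ 0 → l ∈ Finset.Icc ag bg)
    (hhsupp : ∀ l : ℤ, h l ≠ 0 → l ∈ Finset.Icc ah bh) :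
    WexlerRazZ a M g h ↔ WexlerRazFin L a M (periodize L g) (periodize L h) := by
  classical
  obtain ⟨x₀, hx₀⟩ := hinter
  simp only [Finset.mem_inter, Finset.mem_Icc] at hx₀
  obtain ⟨⟨hx1, hx2⟩, hx3, hx4⟩ := hx₀
  have hgI : ag ≤ bg := le_trans hx1 hx2
  have hhI : ah ≤ bh := le_trans hx3 hx4
  have hLgZ : (Lg : ℤ) = bg - ag + 1 := by rw [← hLg, Int.card_Icc]; omega
  have hLhZ : (Lh : ℤ) = bh - ah + 1 := by rw [← hLh, Int.card_Icc]; omega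
  have hLcast : (Lg:ℤ) + (Lh:ℤ) < (L:ℤ) := by exact_mod_cast hL
  have hD : (bg - ag) + (bh - ah) < (L:ℤ) := by omega
  have hM' : (0:ℤ) < (M:ℤ) := by exact_mod_cast hM
  have hL' : (0:ℤ) < (L:ℤ) := by exact_mod_cast Nat.pos_of_ne_zero (NeZero.ne L)
  -- the "window" condition
  set W : ℤ → Prop := fun n => ah - bg ≤ n * (M:ℤ) ∧ n * (M:ℤ) ≤ bh - ag with hWdef
  have hW0 : W 0 := by constructor <;> simp <;> omega
  have hUniq : ∀ n1 n2 : ℤ, W n1 → W n2 → (L:ℤ) ∣ (n1 - n2) * M → n1 = n2 := by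
    intro n1 n2 h1 h2 hd
    have he : (n1 - n2) * (M:ℤ) = n1 * M - n2 * M := by ring
    have h0 : (n1 - n2) * (M:ℤ) = 0 := by
      refine Int.eq_zero_of_abs_lt_dvd hd ?_
      rw [abs_lt, he]
      constructor <;> linarith [h1.1, h1.2, h2.1, h2.2]
    rcases mul_eq_zero.mp h0 with hc | hc
    · omega
    · exact absurd hc hM'.ne'
  -- CORE identity
  have key : ∀ (m : ℕ) (nZ : ℤ) (ν : ZMod L), ν = ((nZ * (M:ℤ) : ℤ) : ZMod L) → W nZ →
      (∑ x : ZMod L, periodize L h x *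
        star (Complex.exp (2 * Real.pi * Complex.I * (m : ℂ) * (x.val : ℂ) / (a : ℂ)) *
          periodize L g (x - ν)))
      = ∑' l : ℤ, h l * star (g (l - nZ * (M : ℤ)) *
          Complex.exp (2 * Real.pi * Complex.I * (m : ℂ) * (l : ℂ) / (a : ℂ))) := by
    intro m nZ ν hν hw
    rw [tsum_eq_sum (s := Finset.Icc ah bh) (by
      intro l hl
      have hl0 : h l = 0 := by by_contra hc; exact hl (hhsupp l hc)
      rw [hl0, zero_mul])]
    set S : Finset (ZMod L) := (Finset.Icc ah bh).image (fun l : ℤ => ((l : ℤ) : ZMod L)) with hS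
    rw [show (∑ x : ZMod L, periodize L h x *
        star (Complex.exp (2 * Real.pi * Complex.I * (m : ℂ) * (x.val : ℂ) / (a : ℂ)) *
          periodize L g (x - ν)))
        = ∑ x ∈ S, periodize L h x *
        star (Complex.exp (2 * Real.pi * Complex.I * (m : ℂ) * (x.val : ℂ) / (a : ℂ)) *
          periodize L g (x - ν)) from (Finset.sum_subset (Finset.subset_univ S) (by
      intro x _ hx
      have hzero : periodize L h x = 0 := by
        apply periodize_eq_zero
        intro k
        by_contra hc
        apply hx
        rw [hS]
        exact Finset.mem_image.mpr ⟨(x.val : ℤ) - k * L, hhsupp _ hc, cast_sub_mul L x k⟩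
      rw [hzero, zero_mul])).symm]
    rw [hS, Finset.sum_image (by
      intro l1 h1 l2 h2 heq
      simp only [Finset.mem_coe, Finset.mem_Icc] at h1 h2
      have hd : (L:ℤ) ∣ l1 - l2 := (cast_eq_iff_dvd L l1 l2).mp heq
      have := Int.eq_zero_of_abs_lt_dvd hd (by rw [abs_lt]; constructor <;> linarith)
      omega)]
    apply Finset.sum_congr rfl
    intro l hl
    simp only [Finset.mem_Icc] at hl
    have hh' : periodize L h ((l : ℤ) : ZMod L) = h l := by
      apply periodize_cast_eq
      intro k hk
      by_contra hc
      have hmem := hhsupp _ hc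
      simp only [Finset.mem_Icc] at hmem
      have hkL : k * (L:ℤ) = 0 := by
        refine Int.eq_zero_of_abs_lt_dvd (dvd_mul_left _ _) ?_
        rw [abs_lt]
        constructor <;> linarith
      rcases mul_eq_zero.mp hkL with hc2 | hc2
      · exact hk hc2
      · exact absurd hc2 hL'.ne'
    have hphase := phase_eq a L ha haL m l
    have hsub : ((l : ℤ) : ZMod L) - ν = ((l - nZ * (M:ℤ) : ℤ) : ZMod L) := by
      rw [hν]; push_cast; ring
    have hg' : periodize L g (((l : ℤ) : ZMod L) - ν) = g (l - nZ * (M:ℤ)) := by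
      rw [hsub]
      apply periodize_cast_eq
      intro k hk
      by_contra hc
      have hmem := hgsupp _ hc
      simp only [Finset.mem_Icc] at hmem
      have hkL : k * (L:ℤ) = 0 := by
        refine Int.eq_zero_of_abs_lt_dvd (dvd_mul_left _ _) ?_
        rw [abs_lt]
        constructor <;> linarith [hw.1, hw.2]
      rcases mul_eq_zero.mp hkL with hc2 | hc2
      · exact hk hc2
      · exact absurd hc2 hL'.ne'
    rw [hh', hphase, hg', mul_comm (Complex.exp _) (g _)]
  -- vanishing of the finite sum when no compatible lift exists
  have keyF0 : ∀ (m : ℕ) (w : ℤ) (ν : ZMod L), ν = ((w : ℤ) : ZMod L) → (M:ℤ) ∣ w →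
      (∀ nZ : ℤ, (L:ℤ) ∣ nZ * (M:ℤ) - w → ¬ W nZ) →
      (∑ x : ZMod L, periodize L h x *
        star (Complex.exp (2 * Real.pi * Complex.I * (m : ℂ) * (x.val : ℂ) / (a : ℂ)) *
          periodize L g (x - ν))) = 0 := by
    intro m w ν hν hMw hno
    apply Finset.sum_eq_zero
    intro x _
    by_cases hx : ∀ k : ℤ, h ((x.val : ℤ) - k * L) = 0
    · rw [periodize_eq_zero L h x hx, zero_mul]
    · push_neg at hx
      obtain ⟨k, hk⟩ := hx
      have hmem := hhsupp _ hk
      simp only [Finset.mem_Icc] at hmem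
      have hxl : x = ((((x.val : ℤ) - k * L) : ℤ) : ZMod L) := (cast_sub_mul L x k).symm
      have hzero : periodize L g (x - ν) = 0 := by
        rw [hν, hxl, show (((((x.val : ℤ) - k * L) : ℤ) : ZMod L) - ((w : ℤ) : ZMod L))
            = ((((x.val : ℤ) - k * L - w) : ℤ) : ZMod L) from by push_cast; ring]
        apply periodize_cast_eq_zero
        intro k' 
        by_contra hc
        have hmem2 := hgsupp _ hc
        simp only [Finset.mem_Icc] at hmem2
        obtain ⟨c, hcw⟩ := hMw
        refine hno (c + k' * ((L / M : ℕ) : ℤ)) ⟨k', ?_⟩ ⟨?_, ?_⟩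
        · have hLM : ((L / M : ℕ) : ℤ) * (M:ℤ) = (L:ℤ) := by
            exact_mod_cast congrArg (Nat.cast (R := ℤ)) (Nat.div_mul_cancel hML)
          linear_combination k' * hLM - hcw
        · have hLM : ((L / M : ℕ) : ℤ) * (M:ℤ) = (L:ℤ) := by
            exact_mod_cast congrArg (Nat.cast (R := ℤ)) (Nat.div_mul_cancel hML)
          have he : (c + k' * ((L / M : ℕ) : ℤ)) * (M:ℤ) = w + k' * L := by
            linear_combination k' * hLM - hcw
          rw [he]
          linarith
        · have hLM : ((L / M : ℕ) : ℤ) * (M:ℤ) = (L:ℤ) := by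
            exact_mod_cast congrArg (Nat.cast (R := ℤ)) (Nat.div_mul_cancel hML)
          have he : (c + k' * ((L / M : ℕ) : ℤ)) * (M:ℤ) = w + k' * L := by
            linear_combination k' * hLM - hcw
          rw [he]
          linarith
      rw [hzero, mul_zero, star_zero, mul_zero]
  -- vanishing of the Z sum outside the window
  have keyZ0 : ∀ (m : ℕ) (nZ : ℤ), ¬ W nZ →
      (∑' l : ℤ, h l * star (g (l - nZ * (M : ℤ)) *
          Complex.exp (2 * Real.pi * Complex.I * (m : ℂ) * (l : ℂ) / (a : ℂ)))) = 0 := by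
    intro m nZ hw
    have hz : ∀ l : ℤ, h l * star (g (l - nZ * (M:ℤ)) *
        Complex.exp (2 * Real.pi * Complex.I * (m : ℂ) * (l : ℂ) / (a : ℂ))) = 0 := by
      intro l
      by_cases h1 : h l = 0
      · rw [h1, zero_mul]
      · have hl := hhsupp _ h1
        simp only [Finset.mem_Icc] at hl
        have h2 : g (l - nZ * (M:ℤ)) = 0 := by
          by_contra hc
          have hm := hgsupp _ hc
          simp only [Finset.mem_Icc] at hm
          exact hw ⟨by linarith, by linarith⟩
        rw [h2, zero_mul, star_zero, mul_zero]
    rw [show (fun l : ℤ => h l * star (g (l - nZ * (M:ℤ)) *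
        Complex.exp (2 * Real.pi * Complex.I * (m : ℂ) * (l : ℂ) / (a : ℂ)))) = fun _ => (0:ℂ)
      from funext hz]
    exact tsum_zero
  constructor
  · intro hWR m hm nF hnF
    by_cases hex : ∃ nZ : ℤ, W nZ ∧ ((nZ * (M:ℤ) : ℤ) : ZMod L) = ((nF * M : ℕ) : ZMod L)
    · obtain ⟨nZ, hwz, hcast⟩ := hex
      rw [key m nZ _ hcast.symm hwz, hWR m hm nZ]
      have hiff : nZ = 0 ↔ nF = 0 := by
        constructor
        · intro h0
          rw [h0] at hcast
          simp only [zero_mul, Int.cast_zero] at hcast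
          have hdvd : (L:ℤ) ∣ ((nF * M : ℕ) : ℤ) := by
            rw [← ZMod.intCast_zmod_eq_zero_iff_dvd]
            push_cast
            push_cast at hcast
            exact hcast.symm
          have hlt : (nF * M : ℕ) < L := by
            calc nF * M < (L / M) * M := by exact (Nat.mul_lt_mul_right hM).mpr hnF
            _ ≤ L := Nat.div_mul_le_self L M
          have hdvd' : (L:ℕ) ∣ nF * M := by exact_mod_cast hdvd
          have h00 := Nat.eq_zero_of_dvd_of_lt hdvd' hlt
          rcases Nat.mul_eq_zero.mp h00 with h | h
          · exact h
          · omega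
        · intro h0
          subst h0
          simp only [zero_mul, Nat.cast_zero] at hcast
          have hdvd : (L:ℤ) ∣ nZ * (M:ℤ) := by
            rw [← ZMod.intCast_zmod_eq_zero_iff_dvd]
            exact hcast
          refine hUniq nZ 0 hwz hW0 ?_
          simpa using hdvd
      by_cases hz : nZ = 0
      · simp [hz, hiff.mp hz]
      · rw [if_neg (fun hc => hz hc.1), if_neg (fun hc => hz (hiff.mpr hc.1))]
    · push_neg at hex
      rw [keyF0 m ((nF * M : ℕ) : ℤ) _ (by push_cast; ring) ⟨(nF:ℤ), by push_cast; ring⟩ (by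
        intro nZ hdvd hw
        exact hex nZ hw (by exact_mod_cast (cast_eq_iff_dvd L (nZ * (M:ℤ)) ((nF * M : ℕ) : ℤ)).mpr hdvd) ) ]
      have hne : ¬ (nF = 0 ∧ m = 0) := by
        rintro ⟨rfl, rfl⟩
        exact hex 0 hW0 (by simp)
      rw [mul_zero, if_neg hne]
  · intro hWR m hm nZ
    by_cases hw : W nZ
    · have hLM0 : 0 < L / M := Nat.div_pos (Nat.le_of_dvd (Nat.pos_of_ne_zero (NeZero.ne L)) hML) hM
      have hLMz : (0:ℤ) < ((L / M : ℕ) : ℤ) := by exact_mod_cast hLM0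
      set nF : ℕ := (nZ % ((L / M : ℕ) : ℤ)).toNat with hnFdef
      have hmod1 := Int.emod_nonneg nZ hLMz.ne'
      have hmod2 := Int.emod_lt_of_pos nZ hLMz
      have hnFZ : (nF : ℤ) = nZ % ((L / M : ℕ) : ℤ) := Int.toNat_of_nonneg hmod1
      have hnFlt : nF < L / M := by
        have : (nF : ℤ) < ((L / M : ℕ) : ℤ) := by rw [hnFZ]; exact hmod2
        exact_mod_cast this
      have hLM : ((L / M : ℕ) : ℤ) * (M:ℤ) = (L:ℤ) := by
        exact_mod_cast congrArg (Nat.cast (R := ℤ)) (Nat.div_mul_cancel hML)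
      have hdvd : (L:ℤ) ∣ nZ * (M:ℤ) - ((nF * M : ℕ) : ℤ) := by
        refine ⟨nZ / ((L / M : ℕ) : ℤ), ?_⟩
        have hdm := Int.mul_ediv_add_emod nZ ((L / M : ℕ) : ℤ)
        rw [Nat.cast_mul, hnFZ]
        linear_combination (-(M:ℤ)) * hdm + (nZ / ((L / M : ℕ) : ℤ)) * hLM
      have hcast : ((nZ * (M:ℤ) : ℤ) : ZMod L) = ((nF * M : ℕ) : ZMod L) := by
        have h2 := (cast_eq_iff_dvd L (nZ * (M:ℤ)) ((nF * M : ℕ) : ℤ)).mpr hdvd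
        exact_mod_cast h2
      have hfin := hWR m hm nF hnFlt
      rw [key m nZ _ hcast.symm hw] at hfin
      rw [hfin]
      have hiff : nZ = 0 ↔ nF = 0 := by
        constructor
        · intro h0
          rw [hnFdef, h0]
          simp
        · intro h0
          refine hUniq nZ 0 hw hW0 ?_
          rw [h0] at hdvd
          simpa using hdvd
      by_cases hz : nZ = 0
      · simp [hz, hiff.mp hz]
      · rw [if_neg (fun hc => hz (hiff.mpr hc.1)), if_neg (fun hc => hz hc.1)]
    · rw [keyZ0 m nZ hw, mul_zero]
      have hne : ¬ (nZ = 0 ∧ m = 0) := by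
        rintro ⟨rfl, -⟩
        exact hw hW0
      rw [if_neg hne]
end

section
/- Let a, M be positive integers and let g, h ∈ ℓ²(ℤ) be supported in finite integer intervals I_g, I_h of lengths L_g and L_h, both centered at 0, with I_g ∩ I_h ≠ ∅. Let L be a positive integer with L ≥ L_g, L ≥ L_h, a | L and M | L, and let g_fin, h_fin ∈ ℂ^L be the periodizations of g and h. If g and h satisfy the Wexler–Raz equations on ℓ²(ℤ) for parameters a, M, then g_fin and h_fin satisfy the Wexler–Raz equations on ℂ^L for parameters a, M. -/
lemma tsum_shift (g : ℤ → ℂ) (L t c : ℤ) :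
    (∑' k : ℤ, g (t + c * L - k * L)) = ∑' k : ℤ, g (t - k * L) := by
  calc (∑' k : ℤ, g (t + c * L - k * L))
      = ∑' k : ℤ, g (t + c * L - ((k + c) : ℤ) * L) :=
        ((Equiv.addRight c).tsum_eq (fun k : ℤ => g (t + c * L - k * L))).symm
    _ = ∑' k : ℤ, g (t - k * L) := tsum_congr fun k => congrArg g (by ring)

lemma cast_dvd_val_sub (L : ℕ) [NeZero L] (x : ZMod L) (t : ℤ) (h : (t : ZMod L) = x) :
    (L : ℤ) ∣ ((x.val : ℤ) - t) := by
  have h0 : (((x.val : ℤ) - t : ℤ) : ZMod L) = 0 := by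
    push_cast [h]
    simp [ZMod.natCast_val, ZMod.cast_id]
  exact (ZMod.intCast_zmod_eq_zero_iff_dvd _ L).mp h0

lemma tsum_val_eq (L : ℕ) [NeZero L] (g : ℤ → ℂ) (x : ZMod L) (t : ℤ)
    (h : (t : ZMod L) = x) :
    (∑' k : ℤ, g ((x.val : ℤ) - k * (L : ℤ))) = ∑' k : ℤ, g (t - k * (L : ℤ)) := by
  obtain ⟨c, hc⟩ := cast_dvd_val_sub L x t h
  have hx : (x.val : ℤ) = t + c * (L : ℤ) := by linear_combination hc
  rw [hx, tsum_shift]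

lemma exp_shift (a : ℕ) (ha : 0 < a) (m : ℕ) (t d : ℤ) (hd : (a : ℤ) ∣ d) :
    Complex.exp (2 * Real.pi * Complex.I * (m : ℂ) * ((t + d : ℤ) : ℂ) / (a : ℂ)) =
      Complex.exp (2 * Real.pi * Complex.I * (m : ℂ) * ((t : ℤ) : ℂ) / (a : ℂ)) := by
  obtain ⟨c, rfl⟩ := hd
  have ha' : (a : ℂ) ≠ 0 := Nat.cast_ne_zero.mpr ha.ne'
  have key : 2 * (Real.pi : ℂ) * Complex.I * (m : ℂ) * ((t + (a : ℤ) * c : ℤ) : ℂ) / (a : ℂ)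
      = 2 * (Real.pi : ℂ) * Complex.I * (m : ℂ) * ((t : ℤ) : ℂ) / (a : ℂ)
        + ((m * c : ℤ) : ℂ) * (2 * (Real.pi : ℂ) * Complex.I) := by
    push_cast
    field_simp
  rw [key, Complex.exp_add, Complex.exp_int_mul_two_pi_mul_I, mul_one]

lemma abs_le_of_abs_mul_le {k L C : ℤ} (hL : 0 < L) (hC : 0 ≤ C) (h : |k * L| ≤ L + C) :
    -(1 + C) ≤ k ∧ k ≤ 1 + C := by
  have h1 : |k| * L ≤ (1 + C) * L := by
    have h2 : |k| * L = |k * L| := by rw [abs_mul, abs_of_pos hL]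
    nlinarith
  have h3 : |k| ≤ 1 + C := le_of_mul_le_mul_right h1 hL
  exact ⟨by linarith [neg_abs_le k], by linarith [le_abs_self k]⟩

lemma sum_zmod_shift (L : ℕ) [NeZero L] (F : ℤ → ℂ) (S : Finset ℤ) (K : Finset ℤ)
    (hS : ∀ l, F l ≠ 0 → l ∈ S)
    (hK : ∀ l, F l ≠ 0 → ((((l : ZMod L)).val : ℤ) - l) / (L : ℤ) ∈ K) :
    (∑ x : ZMod L, ∑ k ∈ K, F ((x.val : ℤ) - k * (L : ℤ))) = ∑ l ∈ S, F l := by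
  classical
  have hL0 : (0 : ℤ) < (L : ℤ) := by exact_mod_cast Nat.pos_of_ne_zero (NeZero.ne L)
  rw [← Finset.sum_product']
  rw [← Finset.sum_filter_ne_zero (Finset.univ ×ˢ K), ← Finset.sum_filter_ne_zero S]
  refine Finset.sum_nbij' (fun p => ((p.1.val : ℤ) - p.2 * (L : ℤ)))
    (fun l => (((l : ZMod L)), (((l : ZMod L).val : ℤ) - l) / (L : ℤ))) ?_ ?_ ?_ ?_ ?_
  · intro p hp
    simp only [Finset.mem_filter] at hp ⊢
    exact ⟨hS _ hp.2, hp.2⟩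
  · intro l hl
    simp only [Finset.mem_filter] at hl ⊢
    obtain ⟨hlS, hlne⟩ := hl
    have hdvd := cast_dvd_val_sub L ((l : ZMod L)) l rfl
    have harg : ((((l : ZMod L)).val : ℤ) - (((l : ZMod L).val : ℤ) - l) / (L : ℤ) * (L : ℤ)) = l := by
      obtain ⟨c, hc⟩ := hdvd
      rw [hc, Int.mul_ediv_cancel_left _ hL0.ne']
      linarith
    refine ⟨?_, by rw [harg]; exact hlne⟩
    exact Finset.mem_product.mpr ⟨Finset.mem_univ _, hK l hlne⟩
  · intro p hp
    have h1 : ((((p.1.val : ℤ) - p.2 * (L : ℤ)) : ℤ) : ZMod L) = p.1 := by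
      push_cast
      simp [ZMod.natCast_val, ZMod.cast_id, ZMod.natCast_self]
    have h2 : (((((p.1.val : ℤ) - p.2 * (L:ℤ) : ℤ) : ZMod L).val : ℤ) - ((p.1.val : ℤ) - p.2 * (L:ℤ))) / (L:ℤ) = p.2 := by
      rw [h1]
      have h3 : ((p.1.val : ℤ) - ((p.1.val : ℤ) - p.2 * (L:ℤ))) = p.2 * (L:ℤ) := by ring
      rw [h3, Int.mul_ediv_cancel _ hL0.ne']
    rw [Prod.ext_iff]
    exact ⟨h1, h2⟩
  · intro l hl
    simp only [Finset.mem_filter] at hl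
    obtain ⟨hlS, hlne⟩ := hl
    obtain ⟨c, hc⟩ := cast_dvd_val_sub L ((l : ZMod L)) l rfl
    show ((((l : ZMod L)).val : ℤ) - (((l : ZMod L).val : ℤ) - l) / (L : ℤ) * (L : ℤ)) = l
    rw [hc, Int.mul_ediv_cancel_left _ hL0.ne']
    linarith
  · intro p _
    rfl

theorem wexler_raz_periodized_of_centered'
    (a M L : ℕ) (ha : 0 < a) (hM : 0 < M) [NeZero L]
    (haL : a ∣ L) (hML : M ∣ L)
    (ag bg ah bh : ℤ)
    (g h : ℤ → ℂ)
    (hgsupp : ∀ l : ℤ, g l ≠ 0 → l ∈ Finset.Icc ag bg)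
    (hhsupp : ∀ l : ℤ, h l ≠ 0 → l ∈ Finset.Icc ah bh)
    (hWR : ∀ m : ℕ, m < a → ∀ n : ℤ,
      (M : ℂ) / (a : ℂ) *
        ∑' l : ℤ, h l * star (g (l - n * (M : ℤ)) *
          Complex.exp (2 * Real.pi * Complex.I * (m : ℂ) * (l : ℂ) / (a : ℂ))) =
        if n = 0 ∧ m = 0 then 1 else 0) :
    ∀ m : ℕ, m < a → ∀ n : ℕ, n < L / M →
    (M : ℂ) / (a : ℂ) *
      ∑ l : ZMod L, periodize L h l *
        star (Complex.exp (2 * Real.pi * Complex.I * (m : ℂ) * (l.val : ℂ) / (a : ℂ)) *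
          periodize L g (l - ((n * M : ℕ) : ZMod L))) =
      if n = 0 ∧ m = 0 then 1 else 0 := by
  classical
  intro m hm n hn
  have hL0 : 0 < L := Nat.pos_of_ne_zero (NeZero.ne L)
  have hL0' : (0:ℤ) < (L:ℤ) := by exact_mod_cast hL0
  set D : ℕ := L / M with hDdef
  have hDM : (D:ℤ) * (M:ℤ) = (L:ℤ) := by exact_mod_cast Nat.div_mul_cancel hML
  have hD0 : 0 < D := Nat.div_pos (Nat.le_of_dvd hL0 hML) hM
  have hD0' : (0:ℤ) < (D:ℤ) := by exact_mod_cast hD0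
  have hnD : (n:ℤ) < (D:ℤ) := by exact_mod_cast hn
  have hn0 : (0:ℤ) ≤ (n:ℤ) := Int.natCast_nonneg _
  have hM1 : (1:ℤ) ≤ (M:ℤ) := by exact_mod_cast hM
  have haLz : (a:ℤ) ∣ (L:ℤ) := Int.natCast_dvd_natCast.mpr haL
  have hnM0 : (0:ℤ) ≤ (n:ℤ) * (M:ℤ) := by positivity
  have hnML : (n:ℤ) * (M:ℤ) ≤ (L:ℤ) - (M:ℤ) := by nlinarith
  set A : ℤ := |ag| + |bg| with hA
  set B : ℤ := |ah| + |bh| with hB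
  have hA0 : 0 ≤ A := by positivity
  have hB0 : 0 ≤ B := by positivity
  set K : Finset ℤ := Finset.Icc (-(1+B)) (1+B) with hK
  set Jf : Finset ℤ := Finset.Icc (-(1+(A+B))) (1+(A+B)) with hJ
  -- step 1
  have step1 : ∀ x : ZMod L,
      periodize L h x *
        star (Complex.exp (2 * Real.pi * Complex.I * (m : ℂ) * (x.val : ℂ) / (a : ℂ)) *
          periodize L g (x - ((n * M : ℕ) : ZMod L)))
      = ∑ k ∈ K, h ((x.val:ℤ) - k*(L:ℤ)) *
          star (Complex.exp (2 * Real.pi * Complex.I * (m : ℂ) *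
              ((((x.val:ℤ) - k*(L:ℤ)) : ℤ) : ℂ) / (a : ℂ)) *
            ∑' j : ℤ, g ((x.val:ℤ) - k*(L:ℤ) - (n:ℤ)*(M:ℤ) - j*(L:ℤ))) := by
    intro x
    have hxval : ((x.val:ℕ):ℤ) < (L:ℤ) := by exact_mod_cast ZMod.val_lt x
    have hxval0 : (0:ℤ) ≤ ((x.val:ℕ):ℤ) := Int.natCast_nonneg _
    have hper : periodize L h x = ∑ k ∈ K, h ((x.val:ℤ) - k*(L:ℤ)) := by
      refine tsum_eq_sum ?_
      intro k hk
      by_contra hne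
      have hmem := hhsupp _ hne
      rw [Finset.mem_Icc] at hmem
      have habs : |k * (L:ℤ)| ≤ (L:ℤ) + B := by
        rw [abs_le]
        constructor <;>
          linarith [neg_abs_le ah, le_abs_self bh, abs_nonneg ah, abs_nonneg bh, hmem.1, hmem.2]
      obtain ⟨h1, h2⟩ := abs_le_of_abs_mul_le hL0' hB0 habs
      exact hk (Finset.mem_Icc.mpr ⟨h1, h2⟩)
    rw [hper, Finset.sum_mul]
    refine Finset.sum_congr rfl (fun k _ => ?_)
    have hd : (a:ℤ) ∣ k*(L:ℤ) := Dvd.dvd.mul_left haLz k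
    have he := exp_shift a ha m ((x.val:ℤ) - k*(L:ℤ)) (k*(L:ℤ)) hd
    have e1 : ((((x.val:ℤ) - k*(L:ℤ) + k*(L:ℤ)) : ℤ) : ℂ) = ((x.val : ℕ) : ℂ) := by
      push_cast; ring
    rw [e1] at he
    have hcast : ((((x.val:ℤ) - k*(L:ℤ) - (n:ℤ)*(M:ℤ)) : ℤ) : ZMod L)
        = x - ((n * M : ℕ) : ZMod L) := by
      push_cast
      simp [ZMod.natCast_val, ZMod.cast_id, ZMod.natCast_self]
    have hpg : periodize L g (x - ((n * M : ℕ) : ZMod L))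
        = ∑' j : ℤ, g ((x.val:ℤ) - k*(L:ℤ) - (n:ℤ)*(M:ℤ) - j*(L:ℤ)) :=
      tsum_val_eq L g (x - ((n * M : ℕ) : ZMod L)) _ hcast
    rw [he, hpg]
  -- step 2
  have key : (∑ x : ZMod L, periodize L h x *
        star (Complex.exp (2 * Real.pi * Complex.I * (m : ℂ) * (x.val : ℂ) / (a : ℂ)) *
          periodize L g (x - ((n * M : ℕ) : ZMod L))))
      = ∑ l ∈ Finset.Icc ah bh, h l *
          star (Complex.exp (2 * Real.pi * Complex.I * (m : ℂ) * ((l:ℤ) : ℂ) / (a : ℂ)) *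
            ∑' j : ℤ, g (l - (n:ℤ)*(M:ℤ) - j*(L:ℤ))) := by
    rw [Finset.sum_congr rfl (fun x _ => step1 x)]
    refine sum_zmod_shift L
      (fun l => h l * star (Complex.exp (2 * Real.pi * Complex.I * (m : ℂ) * ((l:ℤ) : ℂ) / (a : ℂ)) *
        ∑' j : ℤ, g (l - (n:ℤ)*(M:ℤ) - j*(L:ℤ)))) (Finset.Icc ah bh) K ?_ ?_
    · intro l hl
      by_contra hns
      apply hl
      have hz : h l = 0 := by
        by_contra hh; exact hns (hhsupp l hh)
      simp [hz]
    · intro l hl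
      have hlS : l ∈ Finset.Icc ah bh := by
        by_contra hns
        apply hl
        have hz : h l = 0 := by
          by_contra hh; exact hns (hhsupp l hh)
        simp [hz]
      rw [Finset.mem_Icc] at hlS
      obtain ⟨c, hc⟩ := cast_dvd_val_sub L ((l : ZMod L)) l rfl
      have hval : (((l : ZMod L)).val : ℤ) < (L:ℤ) := by exact_mod_cast ZMod.val_lt _
      have hval0 : (0:ℤ) ≤ (((l : ZMod L)).val : ℤ) := Int.natCast_nonneg _
      have hcq : ((((l : ZMod L)).val : ℤ) - l) / (L:ℤ) = c := by
        rw [hc, Int.mul_ediv_cancel_left _ hL0'.ne']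
      rw [hcq]
      have hcL : c * (L:ℤ) = (((l : ZMod L)).val : ℤ) - l := by linear_combination -hc
      have habs : |c * (L:ℤ)| ≤ (L:ℤ) + B := by
        rw [abs_le]
        constructor <;>
          linarith [neg_abs_le ah, le_abs_self bh, abs_nonneg ah, abs_nonneg bh]
      obtain ⟨h1, h2⟩ := abs_le_of_abs_mul_le hL0' hB0 habs
      exact Finset.mem_Icc.mpr ⟨h1, h2⟩
  -- step 3
  have step3 : ∀ l ∈ Finset.Icc ah bh,
      h l * star (Complex.exp (2 * Real.pi * Complex.I * (m : ℂ) * ((l:ℤ) : ℂ) / (a : ℂ)) *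
          ∑' j : ℤ, g (l - (n:ℤ)*(M:ℤ) - j*(L:ℤ)))
      = ∑ j ∈ Jf, h l * star (g (l - ((n:ℤ) + j*(D:ℤ))*(M:ℤ)) *
          Complex.exp (2 * Real.pi * Complex.I * (m : ℂ) * ((l:ℤ) : ℂ) / (a : ℂ))) := by
    intro l hlS
    rw [Finset.mem_Icc] at hlS
    have htsum : (∑' j : ℤ, g (l - (n:ℤ)*(M:ℤ) - j*(L:ℤ)))
        = ∑ j ∈ Jf, g (l - (n:ℤ)*(M:ℤ) - j*(L:ℤ)) := by
      refine tsum_eq_sum ?_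
      intro j hj
      by_contra hne
      have hmem := hgsupp _ hne
      rw [Finset.mem_Icc] at hmem
      have habs : |j * (L:ℤ)| ≤ (L:ℤ) + (A + B) := by
        rw [abs_le]
        constructor <;>
          linarith [neg_abs_le ag, le_abs_self bg, neg_abs_le ah, le_abs_self bh,
            abs_nonneg ag, abs_nonneg bg, abs_nonneg ah, abs_nonneg bh,
            hmem.1, hmem.2, hlS.1, hlS.2]
      obtain ⟨h1, h2⟩ := abs_le_of_abs_mul_le hL0' (by linarith) habs
      exact hj (Finset.mem_Icc.mpr ⟨h1, h2⟩)
    rw [htsum, Finset.mul_sum, star_sum, Finset.mul_sum]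
    refine Finset.sum_congr rfl (fun j _ => ?_)
    refine congrArg (fun z => h l * star z) ?_
    have harg : l - (n:ℤ)*(M:ℤ) - j*(L:ℤ) = l - ((n:ℤ) + j*(D:ℤ))*(M:ℤ) := by
      linear_combination j * hDM
    rw [harg]
    exact mul_comm _ _
  -- step 5
  have step5 : ∀ j : ℤ,
      (M:ℂ)/(a:ℂ) * ∑ l ∈ Finset.Icc ah bh, h l * star (g (l - ((n:ℤ) + j*(D:ℤ))*(M:ℤ)) *
          Complex.exp (2 * Real.pi * Complex.I * (m : ℂ) * ((l:ℤ) : ℂ) / (a : ℂ)))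
      = if ((n:ℤ) + j*(D:ℤ)) = 0 ∧ m = 0 then 1 else 0 := by
    intro j
    have hw := hWR m hm ((n:ℤ) + j*(D:ℤ))
    rw [tsum_eq_sum (s := Finset.Icc ah bh) ?_] at hw
    · exact hw
    · intro l hl
      have hz : h l = 0 := by
        by_contra hh; exact hl (hhsupp l hh)
      rw [hz, zero_mul]
  -- assemble
  rw [key, Finset.sum_congr rfl step3, Finset.sum_comm, Finset.mul_sum]
  rw [Finset.sum_congr rfl (fun j _ => step5 j)]
  have hmem0 : (0:ℤ) ∈ Jf := Finset.mem_Icc.mpr ⟨by linarith, by linarith⟩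
  have hpoint : ∀ j ∈ Jf,
      (if ((n:ℤ) + j*(D:ℤ)) = 0 ∧ m = 0 then (1:ℂ) else 0)
      = if j = (0:ℤ) then (if n = 0 ∧ m = 0 then (1:ℂ) else 0) else 0 := by
    intro j _
    by_cases hj : j = 0
    · subst hj
      rw [if_pos rfl]
      congr 1
      simp [Nat.cast_eq_zero]
    · rw [if_neg hj, if_neg]
      rintro ⟨h1, -⟩
      rcases lt_or_gt_of_ne hj with hlt | hgt
      · have : j * (D:ℤ) ≤ (-1) * (D:ℤ) :=
          mul_le_mul_of_nonneg_right (by omega) (le_of_lt hD0')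
        linarith
      · have : (1:ℤ) * (D:ℤ) ≤ j * (D:ℤ) :=
          mul_le_mul_of_nonneg_right (by omega) (le_of_lt hD0')
        linarith
  rw [Finset.sum_congr rfl hpoint, Finset.sum_ite_eq' Jf (0:ℤ)
    (fun _ => if n = 0 ∧ m = 0 then (1:ℂ) else 0), if_pos hmem0]

/-- for `g`, `h` supported in finite integer intervals of lengths `Lg`, `Lh`,
both centered at `0` (i.e. of the form `Icc (-b) b` or `Icc (-b-1) b`), with nonempty
intersection, and `L ≥ Lg`, `L ≥ Lh` divisible by `a` and `M`, if `(g, h)` satisfies the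
Wexler–Raz equations on `ℓ²(ℤ)` then the periodized pair `(g_fin, h_fin)` satisfies the
Wexler–Raz equations on `ℂ^L`. -/
theorem wexler_raz_periodized_of_centered
    (a M L : ℕ) (ha : 0 < a) (hM : 0 < M) [NeZero L]
    (haL : a ∣ L) (hML : M ∣ L)
    (ag bg ah bh : ℤ) (Lg Lh : ℕ)
    (hLg : (Finset.Icc ag bg).card = Lg) (hLh : (Finset.Icc ah bh).card = Lh)
    (hgcent : ag = -bg ∨ ag = -bg - 1) (hhcent : ah = -bh ∨ ah = -bh - 1)
    (hinter : ((Finset.Icc ag bg) ∩ (Finset.Icc ah bh)).Nonempty)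
    (hLLg : Lg ≤ L) (hLLh : Lh ≤ L)
    (g h : ℤ → ℂ)
    (hgsupp : ∀ l : ℤ, g l ≠ 0 → l ∈ Finset.Icc ag bg)
    (hhsupp : ∀ l : ℤ, h l ≠ 0 → l ∈ Finset.Icc ah bh)
    (hWR : WexlerRazZ a M g h) :
    WexlerRazFin L a M (periodize L g) (periodize L h) := by
  intro m hm n hn
  exact wexler_raz_periodized_of_centered' a M L ha hM haL hML ag bg ah bh g h
    hgsupp hhsupp hWR m hm n hn
end
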